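/- Let Π be a finite set of regimes with at least two elements, let D be any set, and for each pair of distinct i, j ∈ Π let h_{ij} : D → ℝ be a switching-cost function satisfying h_{ij}(z) > 0 for all z ∈ D and the strict triangle inequality h_{ik}(z) < h_{ij}(z) + h_{jk}(z) for all pairwise distinct i, j, k ∈ Π and all z ∈ D. Suppose the functions V_i : D → ℝ satisfy the obstacle inequality V_i(z) ≥ V_k(z) − h_{ik}(z) for all i ∈ Π, all k ≠ i, and all z ∈ D. Then for any distinct i, j ∈ Π and any point z ∈ D at which V_i(z) = V_j(z) − h_{ij}(z), one has V_j(z) > V_k(z) − h_{jk}(z) for every k ≠ j. In particular, the switching region S_{ij} = {z ∈ D : V_i(z) = V_j(z) − h_{ij}(z)} is contained in the continuation region C_j = {z ∈ D : V_j(z) > max_{k ≠ j}(V_k(z) − h_{jk}(z))}. -/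
import Mathlib

/-- In the optimal switching model, under positive switching costs satisfying the strict
triangle inequality and the obstacle inequality for the value functions, the switching
region `S_{ij}` is contained in the continuation region `C_j`: at any point where
`V_i = V_j - h_{ij}`, one has `V_j > V_k - h_{jk}` for every `k ≠ j`. -/
theorem switching_region_subset_continuation_region
    {I D : Type*} [Fintype I] [Nontrivial I]
    (h : I → I → D → ℝ) (V : I → D → ℝ)
    (hpos : ∀ i j : I, i ≠ j → ∀ z : D, 0 < h i j z)
    (htri : ∀ i j k : I, i ≠ j → j ≠ k → i ≠ k → ∀ z : D,
      h i k z < h i j z + h j k z)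
    (hobs : ∀ i : I, ∀ k : I, k ≠ i → ∀ z : D, V i z ≥ V k z - h i k z) :
    ∀ i j : I, i ≠ j → ∀ z : D, V i z = V j z - h i j z →
      ∀ k : I, k ≠ j → V j z > V k z - h j k z := by
  intro i j hij z hz k hkj
  by_cases hki : k = i
  · subst hki
    have h1 := hpos k j hij z
    have h2 := hpos j k (Ne.symm hij) z
    linarith
  · have h1 := hobs i k hki z
    have h2 := htri i j k hij (Ne.symm hkj) (Ne.symm hki) z
    linarith
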